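/- Fix a total order on the taxa set X. Then every cherry-picking network on X has a unique smallest CPS (with respect to the induced lexicographic order on sequences, where shorter sequences precede longer ones), and within a reconstructible CPN class two CPNs on X are isomorphic if and only if they have the same smallest CPS. -/

import Mathlib

open scoped Classical

/-- A (representation of a) rooted phylogenetic network: vertices are natural
numbers, `E` is the edge set, `root` the root, `taxa` the set of taxa labelling
the leaves via `label`. -/
structure Network (X : Type) where
  V : Finset ℕ
  E : Finset (ℕ × ℕ)
  root : ℕ
  taxa : Finset X
  label : X → ℕ

namespace Network

variable {X : Type}

noncomputable def indeg (N : Network X) (v : ℕ) : ℕ :=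
  (N.E.filter (fun e => e.2 = v)).card

noncomputable def outdeg (N : Network X) (v : ℕ) : ℕ :=
  (N.E.filter (fun e => e.1 = v)).card

noncomputable def parents (N : Network X) (v : ℕ) : Finset ℕ :=
  (N.E.filter (fun e => e.2 = v)).image Prod.fst

noncomputable def children (N : Network X) (v : ℕ) : Finset ℕ :=
  (N.E.filter (fun e => e.1 = v)).image Prod.snd

/-- The parent of a vertex (meaningful when the vertex has a unique parent,
e.g. for leaves). -/
noncomputable def theParent (N : Network X) (v : ℕ) : ℕ :=
  WithTop.untopD 0 (N.parents v).min

def IsLeafNode (N : Network X) (v : ℕ) : Prop := N.indeg v = 1 ∧ N.outdeg v = 0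

def IsTreeNode (N : Network X) (v : ℕ) : Prop := N.indeg v = 1 ∧ 2 ≤ N.outdeg v

def IsRetic (N : Network X) (v : ℕ) : Prop := 2 ≤ N.indeg v ∧ N.outdeg v = 1

/-- Well-formedness: a phylogenetic network has a single outdegree-1, indegree-0
root, leaves bijectively labelled by the taxa, all other nodes tree nodes or
reticulations, and it is acyclic. -/
def IsPhylo (N : Network X) : Prop :=
  N.root ∈ N.V ∧ N.indeg N.root = 0 ∧ N.outdeg N.root = 1 ∧
  (∀ e ∈ N.E, e.1 ∈ N.V ∧ e.2 ∈ N.V) ∧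
  Set.InjOn N.label ↑N.taxa ∧
  (∀ x ∈ N.taxa, N.label x ∈ N.V ∧ N.IsLeafNode (N.label x)) ∧
  (∀ v ∈ N.V, N.IsLeafNode v → ∃ x ∈ N.taxa, N.label x = v) ∧
  (∀ v ∈ N.V, v = N.root ∨ N.IsLeafNode v ∨ N.IsTreeNode v ∨ N.IsRetic v) ∧
  (∀ v : ℕ, ¬ Relation.TransGen (fun a b => (a, b) ∈ N.E) v v)

def SemiBinary (N : Network X) : Prop := ∀ v ∈ N.V, N.IsTreeNode v → N.outdeg v = 2

def IsBinary (N : Network X) : Prop :=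
  N.SemiBinary ∧ ∀ v ∈ N.V, N.IsRetic v → N.indeg v = 2

def StackFree (N : Network X) : Prop :=
  ∀ e ∈ N.E, ¬ (N.IsRetic e.1 ∧ N.IsRetic e.2)

def IsTreeChild (N : Network X) : Prop :=
  N.StackFree ∧
  ∀ v ∈ N.V, N.IsTreeNode v → ∃ c ∈ N.children v, N.IsTreeNode c ∨ N.IsLeafNode c

def IsTree (N : Network X) : Prop := ∀ v ∈ N.V, ¬ N.IsRetic v

/-- Number of reticulation edges minus number of reticulations. -/
noncomputable def reticulationNumber (N : Network X) : ℕ :=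
  (N.E.filter (fun e => N.IsRetic e.2)).card - (N.V.filter (fun v => N.IsRetic v)).card

/-- `(x, y)` is a cherry: two distinct leaves sharing a parent. -/
def IsCherry (N : Network X) (x y : X) : Prop :=
  x ∈ N.taxa ∧ y ∈ N.taxa ∧ x ≠ y ∧
  ∃ p : ℕ, (p, N.label x) ∈ N.E ∧ (p, N.label y) ∈ N.E

/-- `(x, y)` is a reticulated cherry: the parent of `x` is a reticulation, the
parent of `y` a tree node which is also a parent of the parent of `x`. -/
def IsRetCherry (N : Network X) (x y : X) : Prop :=
  x ∈ N.taxa ∧ y ∈ N.taxa ∧ x ≠ y ∧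
  ∃ px py : ℕ, (px, N.label x) ∈ N.E ∧ (py, N.label y) ∈ N.E ∧
    N.IsRetic px ∧ N.IsTreeNode py ∧ (py, px) ∈ N.E

def ReduciblePair (N : Network X) (x y : X) : Prop :=
  N.IsCherry x y ∨ N.IsRetCherry x y

noncomputable def delVert (N : Network X) (v : ℕ) : Network X :=
  { V := N.V.erase v,
    E := N.E.filter (fun e => e.1 ≠ v ∧ e.2 ≠ v),
    root := N.root, taxa := N.taxa, label := N.label }

noncomputable def delEdge (N : Network X) (e : ℕ × ℕ) : Network X :=
  { N with E := N.E.erase e }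

/-- Suppress a degree-2 (indegree-1, outdegree-1) vertex. -/
noncomputable def suppress (N : Network X) (v : ℕ) : Network X :=
  if N.indeg v = 1 ∧ N.outdeg v = 1 then
    { V := N.V.erase v,
      E := (N.E.filter (fun e => e.1 ≠ v ∧ e.2 ≠ v)) ∪ (N.parents v ×ˢ N.children v),
      root := N.root, taxa := N.taxa, label := N.label }
  else N

/-- Reduce an ordered pair `(x, y)`: in the cherry case delete the leaf `x` and
suppress its parent; in the reticulated-cherry case delete the reticulation edge
between the two parents and suppress the resulting degree-2 vertices; otherwise
do nothing. -/
noncomputable def reducePair (N : Network X) (c : X × X) : Network X :=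
  if N.IsCherry c.1 c.2 then
    suppress
      { V := N.V.erase (N.label c.1),
        E := N.E.filter (fun e => e.1 ≠ N.label c.1 ∧ e.2 ≠ N.label c.1),
        root := N.root, taxa := N.taxa.erase c.1, label := N.label }
      (N.theParent (N.label c.1))
  else if N.IsRetCherry c.1 c.2 then
    (((N.delEdge (N.theParent (N.label c.2), N.theParent (N.label c.1))).suppress
        (N.theParent (N.label c.2))).suppress (N.theParent (N.label c.1)))
  else N

/-- Successive reduction of a network by a sequence of ordered pairs. -/
noncomputable def reduceSeq (N : Network X) (S : List (X × X)) : Network X :=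
  S.foldl (fun M c => M.reducePair c) N

/-- A network consisting of a single leaf, its root, and the edge between them. -/
def IsSingleLeaf (N : Network X) : Prop :=
  ∃ x ∈ N.taxa, N.V = {N.root, N.label x} ∧ N.E = {(N.root, N.label x)} ∧
    N.root ≠ N.label x

/-- `S` reduces `N` to a single-leaf network. -/
def Reduces (S : List (X × X)) (N : Network X) : Prop :=
  (N.reduceSeq S).IsSingleLeaf

/-- A cherry-picking sequence: ordered pairs of distinct taxa such that each
second coordinate reappears later as a first coordinate, or is the second
coordinate of the last pair. -/
def IsCPS (S : List (X × X)) : Prop :=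
  (∀ p ∈ S, p.1 ≠ p.2) ∧
  ∀ (i : ℕ) (hi : i < S.length),
    ((S.get ⟨i, hi⟩).2 ∈ (S.drop (i + 1)).map Prod.fst) ∨
    (∃ q, S.getLast? = some q ∧ (S.get ⟨i, hi⟩).2 = q.2)

/-- A tree-child sequence: a CPS in which a leaf appearing as a first coordinate
never appears later as a second coordinate. -/
def IsTCS (S : List (X × X)) : Prop :=
  IsCPS S ∧
  ∀ (i j : ℕ) (hi : i < S.length) (hj : j < S.length),
    i < j → (S.get ⟨i, hi⟩).1 ≠ (S.get ⟨j, hj⟩).2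

def IsPartialCPS (S : List (X × X)) : Prop := ∃ T, IsCPS (S ++ T)

def IsPartialTCS (S : List (X × X)) : Prop := ∃ T, IsTCS (S ++ T)

/-- A minimal CPS for `N`: a CPS reducing `N` in which every pair changes the
network. -/
def IsMinimalCPS (S : List (X × X)) (N : Network X) : Prop :=
  IsCPS S ∧ Reduces S N ∧
  ∀ i < S.length, N.reduceSeq (S.take (i + 1)) ≠ N.reduceSeq (S.take i)

def IsMinimalTCS (S : List (X × X)) (N : Network X) : Prop :=
  IsTCS S ∧ Reduces S N ∧
  ∀ i < S.length, N.reduceSeq (S.take (i + 1)) ≠ N.reduceSeq (S.take i)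

/-- A cherry-picking network: a phylogenetic network reducible by some CPS. -/
def IsCPN (N : Network X) : Prop :=
  N.IsPhylo ∧ ∃ S, IsCPS S ∧ Reduces S N

/-- A directed path in `N`, given as its list of vertices. -/
def IsDipath (N : Network X) (l : List ℕ) : Prop :=
  l.Chain' (fun a b => (a, b) ∈ N.E)

def pathEdges (l : List ℕ) : List (ℕ × ℕ) := l.zip l.tail

/-- An embedding of `N'` into `N`: an injective node map and a map of edges to
edge-disjoint directed paths, respecting the node map and the leaf labels. -/
def IsEmbedding (N' N : Network X) (f : ℕ → ℕ) (g : ℕ × ℕ → List ℕ) : Prop :=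
  (∀ v ∈ N'.V, f v ∈ N.V) ∧
  Set.InjOn f ↑N'.V ∧
  (∀ x ∈ N'.taxa, f (N'.label x) = N.label x) ∧
  (∀ e ∈ N'.E, N.IsDipath (g e) ∧ (g e).head? = some (f e.1) ∧
    (g e).getLast? = some (f e.2)) ∧
  (∀ e ∈ N'.E, ∀ e' ∈ N'.E, e ≠ e' →
    ∀ p ∈ pathEdges (g e), p ∉ pathEdges (g e'))

/-- `N'` is a subnetwork of `N` if `N'` embeds into `N`. -/
def IsSubnetwork (N' N : Network X) : Prop :=
  ∃ f g, IsEmbedding N' N f g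

/-- Contract the edge `(u, v)`, identifying `v` with `u`. -/
noncomputable def contractEdge (N : Network X) (u v : ℕ) : Network X :=
  { V := N.V.erase v,
    E := (N.E.erase (u, v)).image
      (fun e => ((if e.1 = v then u else e.1), (if e.2 = v then u else e.2))),
    root := if N.root = v then u else N.root,
    taxa := N.taxa,
    label := fun x => if N.label x = v then u else N.label x }

def ContractStep (N M : Network X) : Prop :=
  ∃ u v : ℕ, (u, v) ∈ N.E ∧ M = N.contractEdge u v

/-- `N` is a refinement of `M` if `M` can be obtained from `N` by contracting
some edges. -/
def IsRefinement (N M : Network X) : Prop :=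
  Relation.ReflTransGen ContractStep N M

/-- `N` contains `M` if some refinement of `M` is a subnetwork of `N`. -/
def Contains (N M : Network X) : Prop :=
  ∃ M' : Network X, IsRefinement M' M ∧ IsSubnetwork M' N

/-- Isomorphism of labelled networks. -/
def Isomorphic (N N' : Network X) : Prop :=
  N.taxa = N'.taxa ∧
  ∃ f : ℕ → ℕ, Set.BijOn f ↑N.V ↑N'.V ∧
    (∀ u ∈ N.V, ∀ v ∈ N.V, ((u, v) ∈ N.E ↔ (f u, f v) ∈ N'.E)) ∧
    f N.root = N'.root ∧
    (∀ x ∈ N.taxa, f (N.label x) = N'.label x)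

end Network

open Network

/-- Lexicographic order on ordered pairs induced by an order on the taxa. -/
def pairLt {X : Type} [LinearOrder X] (a b : X × X) : Prop :=
  a.1 < b.1 ∨ (a.1 = b.1 ∧ a.2 < b.2)

/-- Order on sequences: shorter sequences are smaller; sequences of equal
length are compared at the first differing position. -/
def seqLE {X : Type} [LinearOrder X] (S T : List (X × X)) : Prop :=
  S.length < T.length ∨
  (S.length = T.length ∧ (S = T ∨ List.Lex pairLt S T))

/-- A smallest CPS reducing `N`. -/
def SmallestCPS {X : Type} [LinearOrder X] (S : List (X × X)) (N : Network X) :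
    Prop :=
  IsCPS S ∧ Reduces S N ∧ ∀ T, IsCPS T → Reduces T N → seqLE S T

/-- A class of CPNs is reconstructible if any two of its members sharing a
common minimal CPS are isomorphic. -/
def Reconstructible {X : Type} (C : Network X → Prop) : Prop :=
  ∀ M M' : Network X, C M → C M' →
    (∃ S, IsMinimalCPS S M ∧ IsMinimalCPS S M') → Isomorphic M M'

section OrderAux
variable {X : Type} [LinearOrder X]

theorem pairLt_trichot (a b : X × X) : pairLt a b ∨ a = b ∨ pairLt b a := by
  rcases lt_trichotomy a.1 b.1 with h | h | h
  · exact Or.inl (Or.inl h)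
  · rcases lt_trichotomy a.2 b.2 with h2 | h2 | h2
    · exact Or.inl (Or.inr ⟨h, h2⟩)
    · exact Or.inr (Or.inl (Prod.ext h h2))
    · exact Or.inr (Or.inr (Or.inr ⟨h.symm, h2⟩))
  · exact Or.inr (Or.inr (Or.inl h))

theorem pairLt_asymm {a b : X × X} (h1 : pairLt a b) (h2 : pairLt b a) : False := by
  rcases h1 with h1 | ⟨e1, h1⟩ <;> rcases h2 with h2 | ⟨e2, h2⟩
  · exact absurd h2 (lt_asymm h1)
  · exact absurd e2 (ne_of_gt h1)
  · exact absurd e1 (ne_of_gt h2)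
  · exact absurd h2 (lt_asymm h1)

theorem pairLt_trans {a b c : X × X} (h1 : pairLt a b) (h2 : pairLt b c) : pairLt a c := by
  rcases h1 with h1 | ⟨e1, h1⟩ <;> rcases h2 with h2 | ⟨e2, h2⟩
  · exact Or.inl (lt_trans h1 h2)
  · exact Or.inl (e2 ▸ h1)
  · exact Or.inl (e1 ▸ h2)
  · exact Or.inr ⟨e1.trans e2, lt_trans h1 h2⟩

instance : IsTrichotomous (X × X) (pairLt) :=
  ⟨fun a b h1 h2 => ((pairLt_trichot a b).resolve_left h1).resolve_right h2⟩
instance : IsAsymm (X × X) (pairLt) := ⟨fun _ _ h1 h2 => pairLt_asymm h1 h2⟩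

theorem lex_trans : ∀ {a b c : List (X × X)},
    List.Lex pairLt a b → List.Lex pairLt b c → List.Lex pairLt a c
  | _, _, _, .nil, .rel _ => .nil
  | _, _, _, .nil, .cons _ => .nil
  | _, _, _, .rel h, .rel h' => .rel (pairLt_trans h h')
  | _, _, _, .rel h, .cons _ => .rel h
  | _, _, _, .cons _, .rel h => .rel h
  | _, _, _, .cons h, .cons h' => .cons (lex_trans h h')

theorem lex_asymm {a b : List (X × X)} (h1 : List.Lex pairLt a b)
    (h2 : List.Lex pairLt b a) : False :=
  (List.Lex.asymm pairLt).asymm _ _ h1 h2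

theorem lex_trichot (a b : List (X × X)) :
    List.Lex pairLt a b ∨ a = b ∨ List.Lex pairLt b a :=
  trichotomous_of (List.Lex pairLt) a b

theorem seqLE_antisymm {S T : List (X × X)} (h1 : seqLE S T) (h2 : seqLE T S) : S = T := by
  rcases h1 with h1 | ⟨e1, h1⟩
  · rcases h2 with h2 | ⟨e2, _⟩
    · omega
    · omega
  · rcases h2 with h2 | ⟨_, h2⟩
    · omega
    · rcases h1 with h1 | h1
      · exact h1
      · rcases h2 with h2 | h2
        · exact h2.symm
        · exact absurd h2 (fun h => lex_asymm h1 h)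

theorem seqLE_length {S T : List (X × X)} (h : seqLE S T) : S.length ≤ T.length := by
  rcases h with h | ⟨h, _⟩ <;> omega

theorem exists_lex_min_finset (s : Finset (List (X × X))) (hne : s.Nonempty) :
    ∃ m ∈ s, ∀ t ∈ s, m = t ∨ List.Lex pairLt m t := by
  classical
  induction s using Finset.induction_on with
  | empty => exact absurd hne (by simp)
  | @insert a s ha ih =>
    rcases s.eq_empty_or_nonempty with rfl | hs
    · exact ⟨a, by simp, by simp⟩
    · obtain ⟨m, hm, hmin⟩ := ih hs
      rcases lex_trichot a m with h | h | h
      · refine ⟨a, Finset.mem_insert_self _ _, ?_⟩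
        intro t ht
        rcases Finset.mem_insert.1 ht with rfl | ht
        · exact Or.inl rfl
        · rcases hmin t ht with rfl | h' 
          · exact Or.inr h
          · exact Or.inr (lex_trans h h')
      · refine ⟨m, Finset.mem_insert_of_mem hm, ?_⟩
        intro t ht
        rcases Finset.mem_insert.1 ht with rfl | ht
        · exact Or.inl h.symm
        · exact hmin t ht
      · refine ⟨m, Finset.mem_insert_of_mem hm, ?_⟩
        intro t ht
        rcases Finset.mem_insert.1 ht with rfl | ht
        · exact Or.inr h
        · exact hmin t ht

theorem finite_fixedlen (F : Finset (X × X)) (n : ℕ) :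
    {l : List (X × X) | l.length = n ∧ ∀ p ∈ l, p ∈ F}.Finite := by
  classical
  have h1 : {l : List {p : X × X // p ∈ F} | l.length = n}.Finite :=
    List.finite_length_eq _ n
  have h2 := h1.image (List.map (Subtype.val))
  refine h2.subset ?_
  rintro l ⟨hlen, hmem⟩
  refine ⟨l.attach.map (fun x => (⟨x.1, hmem x.1 x.2⟩ : {p : X × X // p ∈ F})), ?_, ?_⟩
  · simp [hlen]
  · rw [List.map_map]
    exact List.attach_map_subtype_val l

end OrderAux
namespace Network

variable {X : Type}

theorem mem_parents {M : Network X} {a v : ℕ} : a ∈ M.parents v ↔ (a, v) ∈ M.E := by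
  simp only [parents, Finset.mem_image, Finset.mem_filter]
  constructor
  · rintro ⟨⟨x, y⟩, ⟨he, rfl⟩, rfl⟩; exact he
  · intro h; exact ⟨(a, v), ⟨h, rfl⟩, rfl⟩

theorem mem_children {M : Network X} {b v : ℕ} : b ∈ M.children v ↔ (v, b) ∈ M.E := by
  simp only [children, Finset.mem_image, Finset.mem_filter]
  constructor
  · rintro ⟨⟨x, y⟩, ⟨he, rfl⟩, rfl⟩; exact he
  · intro h; exact ⟨(v, b), ⟨h, rfl⟩, rfl⟩

theorem outdeg_eq_zero_iff {M : Network X} {w : ℕ} :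
    M.outdeg w = 0 ↔ ∀ b, (w, b) ∉ M.E := by
  rw [outdeg, Finset.card_eq_zero, Finset.eq_empty_iff_forall_notMem]
  constructor
  · intro h b hb; exact h (w, b) (Finset.mem_filter.2 ⟨hb, rfl⟩)
  · rintro h ⟨a, b⟩ hm
    rw [Finset.mem_filter] at hm
    obtain ⟨he, h1⟩ := hm
    exact h b (by rwa [show a = w from h1] at he)

theorem indeg_eq_zero_iff {M : Network X} {w : ℕ} :
    M.indeg w = 0 ↔ ∀ a, (a, w) ∉ M.E := by
  rw [indeg, Finset.card_eq_zero, Finset.eq_empty_iff_forall_notMem]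
  constructor
  · intro h a ha; exact h (a, w) (Finset.mem_filter.2 ⟨ha, rfl⟩)
  · rintro h ⟨a, b⟩ hm
    rw [Finset.mem_filter] at hm
    obtain ⟨he, h1⟩ := hm
    exact h a (by rwa [show b = w from h1] at he)

theorem indeg_eq_one_iff {M : Network X} {w : ℕ} :
    M.indeg w = 1 ↔ ∃ p, (p, w) ∈ M.E ∧ ∀ a, (a, w) ∈ M.E → a = p := by
  constructor
  · intro h
    obtain ⟨e, he⟩ := Finset.card_eq_one.1 h
    have hev : e ∈ M.E.filter (fun e => e.2 = w) := he ▸ Finset.mem_singleton_self e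
    rw [Finset.mem_filter] at hev
    refine ⟨e.1, ?_, ?_⟩
    · have : (e.1, w) = e := by rw [← hev.2]
      rw [this]; exact hev.1
    · intro a ha
      have : (a, w) ∈ M.E.filter (fun e => e.2 = w) := Finset.mem_filter.2 ⟨ha, rfl⟩
      rw [he, Finset.mem_singleton] at this
      exact congrArg Prod.fst this
  · rintro ⟨p, hp, hu⟩
    have : M.E.filter (fun e => e.2 = w) = {(p, w)} := by
      ext ⟨a, b⟩
      rw [Finset.mem_filter, Finset.mem_singleton, Prod.mk.injEq]
      constructor
      · rintro ⟨he, rfl⟩; exact ⟨hu a he, rfl⟩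
      · rintro ⟨rfl, rfl⟩; exact ⟨hp, rfl⟩
    rw [indeg, this, Finset.card_singleton]

theorem outdeg_eq_one_iff {M : Network X} {w : ℕ} :
    M.outdeg w = 1 ↔ ∃ c, (w, c) ∈ M.E ∧ ∀ b, (w, b) ∈ M.E → b = c := by
  constructor
  · intro h
    obtain ⟨e, he⟩ := Finset.card_eq_one.1 h
    have hev : e ∈ M.E.filter (fun e => e.1 = w) := he ▸ Finset.mem_singleton_self e
    rw [Finset.mem_filter] at hev
    refine ⟨e.2, ?_, ?_⟩
    · have : (w, e.2) = e := by rw [← hev.2]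
      rw [this]; exact hev.1
    · intro b hb
      have : (w, b) ∈ M.E.filter (fun e => e.1 = w) := Finset.mem_filter.2 ⟨hb, rfl⟩
      rw [he, Finset.mem_singleton] at this
      exact congrArg Prod.snd this
  · rintro ⟨c, hc, hu⟩
    have : M.E.filter (fun e => e.1 = w) = {(w, c)} := by
      ext ⟨a, b⟩
      rw [Finset.mem_filter, Finset.mem_singleton, Prod.mk.injEq]
      constructor
      · rintro ⟨he, rfl⟩; exact ⟨rfl, hu b he⟩
      · rintro ⟨rfl, rfl⟩; exact ⟨hc, rfl⟩
    rw [outdeg, this, Finset.card_singleton]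

theorem parents_singleton {M : Network X} {w : ℕ} (h : M.indeg w = 1) :
    ∃ p, M.parents w = {p} ∧ M.theParent w = p ∧ (p, w) ∈ M.E ∧
      ∀ a, (a, w) ∈ M.E → a = p := by
  obtain ⟨p, hp, hu⟩ := indeg_eq_one_iff.1 h
  have hps : M.parents w = {p} := by
    ext a
    rw [mem_parents, Finset.mem_singleton]
    exact ⟨fun ha => hu a ha, fun ha => ha ▸ hp⟩
  refine ⟨p, hps, ?_, hp, hu⟩
  rw [theParent, hps, Finset.min_singleton]
  rfl

theorem theParent_edge {M : Network X} {w : ℕ} (h : M.indeg w = 1) :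
    (M.theParent w, w) ∈ M.E ∧ ∀ a, (a, w) ∈ M.E → a = M.theParent w := by
  obtain ⟨p, _, hp2, hp3, hp4⟩ := parents_singleton h
  exact ⟨hp2 ▸ hp3, fun a ha => by rw [hp2]; exact hp4 a ha⟩

theorem suppress_taxa (M : Network X) (v : ℕ) : (M.suppress v).taxa = M.taxa := by
  unfold suppress; split <;> rfl

theorem suppress_label (M : Network X) (v : ℕ) : (M.suppress v).label = M.label := by
  unfold suppress; split <;> rfl

theorem suppress_root (M : Network X) (v : ℕ) : (M.suppress v).root = M.root := by
  unfold suppress; split <;> rfl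

theorem suppress_V {M : Network X} {v : ℕ} (h : M.indeg v = 1 ∧ M.outdeg v = 1) :
    (M.suppress v).V = M.V.erase v := by
  rw [suppress, if_pos h]

theorem suppress_of_not {M : Network X} {v : ℕ} (h : ¬(M.indeg v = 1 ∧ M.outdeg v = 1)) :
    M.suppress v = M := by
  rw [suppress, if_neg h]

theorem mem_suppress_E {M : Network X} {v : ℕ} (h : M.indeg v = 1 ∧ M.outdeg v = 1)
    {a b : ℕ} :
    ((a, b) ∈ (M.suppress v).E) ↔
      (((a, b) ∈ M.E ∧ a ≠ v ∧ b ≠ v) ∨ ((a, v) ∈ M.E ∧ (v, b) ∈ M.E)) := by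
  rw [suppress, if_pos h]
  simp only [Finset.mem_union, Finset.mem_filter, Finset.mem_product]
  constructor
  · rintro (⟨he, h1, h2⟩ | ⟨h1, h2⟩)
    · exact Or.inl ⟨he, h1, h2⟩
    · exact Or.inr ⟨mem_parents.1 h1, mem_children.1 h2⟩
  · rintro (⟨he, h1, h2⟩ | ⟨h1, h2⟩)
    · exact Or.inl ⟨he, h1, h2⟩
    · exact Or.inr ⟨mem_parents.2 h1, mem_children.2 h2⟩

theorem suppress_E_sub {M : Network X} {v a b : ℕ} (h : (a, b) ∈ (M.suppress v).E) :
    (a, b) ∈ M.E ∨ ((a, v) ∈ M.E ∧ (v, b) ∈ M.E) := by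
  by_cases hc : M.indeg v = 1 ∧ M.outdeg v = 1
  · rcases (mem_suppress_E hc).1 h with ⟨he, _, _⟩ | hr
    · exact Or.inl he
    · exact Or.inr hr
  · rw [suppress_of_not hc] at h; exact Or.inl h

/-- The acyclicity invariant. -/
def Acyclic (M : Network X) : Prop :=
  ∀ v : ℕ, ¬ Relation.TransGen (fun a b => (a, b) ∈ M.E) v v

theorem acyclic_of_hom {M M' : Network X}
    (h : ∀ a b : ℕ, (a, b) ∈ M'.E → Relation.TransGen (fun a b => (a, b) ∈ M.E) a b)
    (ha : M.Acyclic) : M'.Acyclic := by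
  intro v hv
  have h2 : Relation.TransGen (Relation.TransGen (fun a b => (a, b) ∈ M.E)) v v :=
    Relation.TransGen.mono h v v hv
  rw [Relation.transGen_idem] at h2
  exact ha v h2

/-- The structural invariant maintained along cherry-picking reductions. -/
structure Inv (M : Network X) : Prop where
  inj : Set.InjOn M.label ↑M.taxa
  leafV : ∀ x ∈ M.taxa, M.label x ∈ M.V
  leafIn : ∀ x ∈ M.taxa, M.indeg (M.label x) = 1
  leafOut : ∀ x ∈ M.taxa, M.outdeg (M.label x) = 0
  rootV : M.root ∈ M.V
  rootIn : M.indeg M.root = 0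
  edgeV : ∀ e ∈ M.E, e.1 ∈ M.V ∧ e.2 ∈ M.V
  acy : M.Acyclic

theorem Inv.of_isPhylo {M : Network X} (h : M.IsPhylo) : M.Inv := by
  obtain ⟨h1, h2, _, h4, h5, h6, _, _, h9⟩ := h
  exact ⟨h5, fun x hx => (h6 x hx).1, fun x hx => (h6 x hx).2.1,
    fun x hx => (h6 x hx).2.2, h1, h2, h4, h9⟩

theorem Inv.no_self_loop {M : Network X} (hI : M.Inv) {v : ℕ} : (v, v) ∉ M.E :=
  fun h => hI.acy v (Relation.TransGen.single h)

theorem inv_suppress {M : Network X} (hI : M.Inv) (v : ℕ) : (M.suppress v).Inv := by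
  by_cases hc : M.indeg v = 1 ∧ M.outdeg v = 1
  · have hV := suppress_V hc
    have hE := fun a b => mem_suppress_E hc (M := M) (v := v) (a := a) (b := b)
    constructor
    · rw [suppress_taxa, suppress_label]; exact hI.inj
    · intro x hx
      rw [suppress_taxa] at hx
      rw [suppress_label, hV, Finset.mem_erase]
      refine ⟨?_, hI.leafV x hx⟩
      intro hxv
      have h0 := hI.leafOut x hx
      rw [hxv, hc.2] at h0
      exact one_ne_zero h0
    · intro x hx
      rw [suppress_taxa] at hx
      rw [suppress_label]
      have hlv : M.label x ≠ v := by
        intro hxv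
        have h0 := hI.leafOut x hx
        rw [hxv, hc.2] at h0
        exact one_ne_zero h0
      obtain ⟨p, hp, hu⟩ := indeg_eq_one_iff.1 (hI.leafIn x hx)
      rw [indeg_eq_one_iff]
      by_cases hpv : p = v
      · obtain ⟨q, hq, hqu⟩ := indeg_eq_one_iff.1 hc.1
        refine ⟨q, (hE q _).2 (Or.inr ⟨hq, hpv ▸ hp⟩), ?_⟩
        intro a ha
        rcases (hE a _).1 ha with ⟨haE, hav, _⟩ | ⟨h1, _⟩
        · exact absurd (hpv ▸ hu a haE) hav
        · exact hqu a h1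
      · refine ⟨p, (hE p _).2 (Or.inl ⟨hp, hpv, hlv⟩), ?_⟩
        intro a ha
        rcases (hE a _).1 ha with ⟨haE, _, _⟩ | ⟨_, h2⟩
        · exact hu a haE
        · exact absurd (hu v h2).symm hpv
    · intro x hx
      rw [suppress_taxa] at hx
      rw [suppress_label, outdeg_eq_zero_iff]
      intro b hb
      rcases (hE _ b).1 hb with ⟨haE, _, _⟩ | ⟨h1, _⟩
      · exact outdeg_eq_zero_iff.1 (hI.leafOut x hx) b haE
      · exact outdeg_eq_zero_iff.1 (hI.leafOut x hx) v h1
    · rw [suppress_root, hV, Finset.mem_erase]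
      refine ⟨?_, hI.rootV⟩
      intro hrv
      have := hI.rootIn
      rw [hrv, hc.1] at this
      exact one_ne_zero this
    · rw [suppress_root, indeg_eq_zero_iff]
      intro a ha
      rcases (hE a _).1 ha with ⟨haE, _, _⟩ | ⟨_, h2⟩
      · exact indeg_eq_zero_iff.1 hI.rootIn a haE
      · exact indeg_eq_zero_iff.1 hI.rootIn v h2
    · rintro ⟨a, b⟩ he
      rcases (hE a b).1 he with ⟨haE, h1, h2⟩ | ⟨h1, h2⟩
      · exact ⟨hV ▸ Finset.mem_erase.2 ⟨h1, (hI.edgeV _ haE).1⟩,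
          hV ▸ Finset.mem_erase.2 ⟨h2, (hI.edgeV _ haE).2⟩⟩
      · have hav : a ≠ v := fun h => hI.no_self_loop (h ▸ h1)
        have hbv : b ≠ v := fun h => hI.no_self_loop (h ▸ h2)
        exact ⟨hV ▸ Finset.mem_erase.2 ⟨hav, (hI.edgeV _ h1).1⟩,
          hV ▸ Finset.mem_erase.2 ⟨hbv, (hI.edgeV _ h2).2⟩⟩
    · refine acyclic_of_hom ?_ hI.acy
      intro a b hab
      rcases suppress_E_sub hab with h | ⟨h1, h2⟩
      · exact Relation.TransGen.single h
      · exact Relation.TransGen.trans (Relation.TransGen.single h1)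
          (Relation.TransGen.single h2)
  · rw [suppress_of_not hc]; exact hI

end Network
namespace Network

variable {X : Type}

theorem inv_cherry_mid {M : Network X} (hI : M.Inv) {x : X} (hx : x ∈ M.taxa) :
    Inv { V := M.V.erase (M.label x),
          E := M.E.filter (fun e => e.1 ≠ M.label x ∧ e.2 ≠ M.label x),
          root := M.root, taxa := M.taxa.erase x, label := M.label } := by
  set u := M.label x with hu
  have hsubE : ∀ e : ℕ × ℕ,
      e ∈ M.E.filter (fun e => e.1 ≠ u ∧ e.2 ≠ u) → e ∈ M.E :=
    fun e he => (Finset.mem_filter.1 he).1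
  constructor
  · refine hI.inj.mono ?_
    rw [Finset.coe_erase]
    exact Set.diff_subset
  · intro z hz
    obtain ⟨hzx, hz⟩ := Finset.mem_erase.1 hz
    have : M.label z ≠ u := fun h => hzx (hI.inj hz hx h)
    exact Finset.mem_erase.2 ⟨this, hI.leafV z hz⟩
  · intro z hz
    obtain ⟨hzx, hz⟩ := Finset.mem_erase.1 hz
    have hlz : M.label z ≠ u := fun h => hzx (hI.inj hz hx h)
    obtain ⟨p, hp, hpu⟩ := indeg_eq_one_iff.1 (hI.leafIn z hz)
    rw [indeg_eq_one_iff]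
    refine ⟨p, ?_, ?_⟩
    · refine Finset.mem_filter.2 ⟨hp, ?_, hlz⟩
      intro hpeq
      have hpeq' : p = u := hpeq
      exact outdeg_eq_zero_iff.1 (hI.leafOut x hx) (M.label z) (by rw [← hu, ← hpeq']; exact hp)
    · intro a ha
      exact hpu a (hsubE _ ha)
  · intro z hz
    obtain ⟨_, hz⟩ := Finset.mem_erase.1 hz
    rw [outdeg_eq_zero_iff]
    intro b hb
    exact outdeg_eq_zero_iff.1 (hI.leafOut z hz) b (hsubE _ hb)
  · refine Finset.mem_erase.2 ⟨?_, hI.rootV⟩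
    intro h
    have := hI.rootIn
    rw [h, hu] at this
    rw [hI.leafIn x hx] at this
    exact one_ne_zero this
  · rw [indeg_eq_zero_iff]
    intro a ha
    exact indeg_eq_zero_iff.1 hI.rootIn a (hsubE _ ha)
  · rintro ⟨a, b⟩ he
    obtain ⟨he, h1, h2⟩ := Finset.mem_filter.1 he
    exact ⟨Finset.mem_erase.2 ⟨h1, (hI.edgeV _ he).1⟩,
      Finset.mem_erase.2 ⟨h2, (hI.edgeV _ he).2⟩⟩
  · refine acyclic_of_hom ?_ hI.acy
    intro a b hab
    exact Relation.TransGen.single (hsubE _ hab)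

theorem inv_delEdge {M : Network X} (hI : M.Inv) {a b : ℕ} (hb : M.outdeg b ≠ 0) :
    (M.delEdge (a, b)).Inv := by
  have hsubE : ∀ e : ℕ × ℕ, e ∈ (M.delEdge (a, b)).E → e ∈ M.E :=
    fun e he => Finset.mem_of_mem_erase he
  constructor
  · exact hI.inj
  · exact hI.leafV
  · intro z hz
    obtain ⟨p, hp, hpu⟩ := indeg_eq_one_iff.1 (hI.leafIn z hz)
    rw [indeg_eq_one_iff]
    refine ⟨p, ?_, fun q hq => hpu q (hsubE _ hq)⟩
    refine Finset.mem_erase.2 ⟨?_, hp⟩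
    intro h
    rw [Prod.mk.injEq] at h
    apply hb
    rw [← h.2, outdeg_eq_zero_iff]
    exact fun c hc => outdeg_eq_zero_iff.1 (hI.leafOut z hz) c hc
  · intro z hz
    rw [outdeg_eq_zero_iff]
    exact fun c hc => outdeg_eq_zero_iff.1 (hI.leafOut z hz) c (hsubE _ hc)
  · exact hI.rootV
  · rw [indeg_eq_zero_iff]
    exact fun q hq => indeg_eq_zero_iff.1 hI.rootIn q (hsubE _ hq)
  · exact fun e he => hI.edgeV e (hsubE _ he)
  · exact acyclic_of_hom (fun u w h => Relation.TransGen.single (hsubE _ h)) hI.acy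

theorem theParent_outdeg_ne_zero {M : Network X} (hI : M.Inv) {x : X} (hx : x ∈ M.taxa) :
    M.outdeg (M.theParent (M.label x)) ≠ 0 := by
  obtain ⟨hp, _⟩ := theParent_edge (hI.leafIn x hx)
  intro h
  exact outdeg_eq_zero_iff.1 h _ hp

theorem inv_reducePair {M : Network X} (hI : M.Inv) (c : X × X) : (M.reducePair c).Inv := by
  rw [reducePair]
  split_ifs with h1 h2
  · exact inv_suppress (inv_cherry_mid hI h1.1) _
  · have hx : c.1 ∈ M.taxa := h2.1
    exact inv_suppress (inv_suppress (inv_delEdge hI (theParent_outdeg_ne_zero hI hx)) _) _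
  · exact hI

theorem reducePair_root (M : Network X) (c : X × X) : (M.reducePair c).root = M.root := by
  rw [reducePair]
  split_ifs
  · rw [suppress_root]
  · rw [suppress_root, suppress_root]; rfl
  · rfl

theorem reducePair_label (M : Network X) (c : X × X) :
    (M.reducePair c).label = M.label := by
  rw [reducePair]
  split_ifs
  · rw [suppress_label]
  · rw [suppress_label, suppress_label]; rfl
  · rfl

theorem reducePair_taxa (M : Network X) (c : X × X) :
    (M.reducePair c).taxa = if M.IsCherry c.1 c.2 then M.taxa.erase c.1 else M.taxa := by
  rw [reducePair]
  split_ifs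
  · rw [suppress_taxa]
  · rw [suppress_taxa, suppress_taxa]; rfl
  · rfl

theorem reducePair_taxa_subset (M : Network X) (c : X × X) :
    (M.reducePair c).taxa ⊆ M.taxa := by
  rw [reducePair_taxa]
  split_ifs
  · exact Finset.erase_subset _ _
  · exact Finset.Subset.refl _

theorem mem_reducePair_taxa {M : Network X} {c : X × X} {b : X} (hb : b ∈ M.taxa)
    (hbc : b ≠ c.1) : b ∈ (M.reducePair c).taxa := by
  rw [reducePair_taxa]
  split_ifs
  · exact Finset.mem_erase.2 ⟨hbc, hb⟩
  · exact hb

theorem reduceSeq_nil (M : Network X) : M.reduceSeq [] = M := rfl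

theorem reduceSeq_cons (M : Network X) (c : X × X) (S : List (X × X)) :
    M.reduceSeq (c :: S) = (M.reducePair c).reduceSeq S := rfl

theorem inv_reduceSeq {M : Network X} (hI : M.Inv) (S : List (X × X)) :
    (M.reduceSeq S).Inv := by
  induction S generalizing M with
  | nil => exact hI
  | cons c S ih => rw [reduceSeq_cons]; exact ih (inv_reducePair hI c)

theorem reduciblePair_of_reducePair_ne {M : Network X} {c : X × X}
    (h : M.reducePair c ≠ M) : M.ReduciblePair c.1 c.2 := by
  rw [reducePair] at h
  split_ifs at h with h1 h2
  · exact Or.inl h1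
  · exact Or.inr h2
  · exact absurd rfl h

theorem reduciblePair_taxa {M : Network X} {x y : X} (h : M.ReduciblePair x y) :
    x ∈ M.taxa ∧ y ∈ M.taxa ∧ x ≠ y := by
  rcases h with ⟨h1, h2, h3, _⟩ | ⟨h1, h2, h3, _⟩
  · exact ⟨h1, h2, h3⟩
  · exact ⟨h1, h2, h3⟩

end Network
namespace Network

variable {X : Type}

/-- The subsequence of pairs of `S` that actually change the network. -/
noncomputable def act (M : Network X) : List (X × X) → List (X × X)
  | [] => []
  | c :: S => if M.reducePair c = M then act M S else c :: act (M.reducePair c) S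

theorem act_nil (M : Network X) : act M [] = [] := rfl

theorem act_cons_pos {M : Network X} {c : X × X} (h : M.reducePair c = M)
    (S : List (X × X)) : act M (c :: S) = act M S := by
  rw [act, if_pos h]

theorem act_cons_neg {M : Network X} {c : X × X} (h : M.reducePair c ≠ M)
    (S : List (X × X)) : act M (c :: S) = c :: act (M.reducePair c) S := by
  rw [act, if_neg h]

theorem reduceSeq_act (M : Network X) (S : List (X × X)) :
    M.reduceSeq (act M S) = M.reduceSeq S := by
  induction S generalizing M with
  | nil => rfl
  | cons c S ih =>
    by_cases h : M.reducePair c = M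
    · rw [act_cons_pos h, reduceSeq_cons, h, ih]
    · rw [act_cons_neg h, reduceSeq_cons, reduceSeq_cons, ih]

theorem length_act_le (M : Network X) (S : List (X × X)) :
    (act M S).length ≤ S.length := by
  induction S generalizing M with
  | nil => exact le_refl _
  | cons c S ih =>
    by_cases h : M.reducePair c = M
    · rw [act_cons_pos h]
      exact le_trans (ih M) (Nat.le_succ _)
    · rw [act_cons_neg h, List.length_cons, List.length_cons]
      exact Nat.succ_le_succ (ih _)

theorem act_eq_of_length (M : Network X) (S : List (X × X))
    (h : (act M S).length = S.length) : act M S = S := by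
  induction S generalizing M with
  | nil => rfl
  | cons c S ih =>
    by_cases hc : M.reducePair c = M
    · exfalso
      rw [act_cons_pos hc] at h
      have := length_act_le M S
      rw [h] at this
      simp at this
    · rw [act_cons_neg hc] at h ⊢
      rw [List.length_cons, List.length_cons] at h
      rw [ih _ (Nat.succ_injective h)]

theorem mem_act_taxa {M : Network X} {S : List (X × X)} {p : X × X}
    (h : p ∈ act M S) : p.1 ∈ M.taxa ∧ p.2 ∈ M.taxa := by
  induction S generalizing M with
  | nil => exact absurd h (by simp [act_nil])
  | cons c S ih =>
    by_cases hc : M.reducePair c = M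
    · rw [act_cons_pos hc] at h
      exact ih h
    · rw [act_cons_neg hc] at h
      rcases List.mem_cons.1 h with rfl | h
      · obtain ⟨h1, h2, _⟩ := reduciblePair_taxa (reduciblePair_of_reducePair_ne hc)
        exact ⟨h1, h2⟩
      · obtain ⟨h1, h2⟩ := ih h
        exact ⟨reducePair_taxa_subset M c h1, reducePair_taxa_subset M c h2⟩

theorem reduceSeq_of_act_nil {M : Network X} {S : List (X × X)} (h : act M S = []) :
    M.reduceSeq S = M := by
  induction S generalizing M with
  | nil => rfl
  | cons c S ih =>
    by_cases hc : M.reducePair c = M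
    · rw [act_cons_pos hc] at h
      rw [reduceSeq_cons, hc, ih h]
    · rw [act_cons_neg hc] at h
      exact absurd h (List.cons_ne_nil _ _)

theorem reduceSeq_append (M : Network X) (S T : List (X × X)) :
    M.reduceSeq (S ++ T) = (M.reduceSeq S).reduceSeq T :=
  List.foldl_append

theorem reduceSeq_take_succ (M : Network X) (S : List (X × X)) (i : ℕ)
    (hi : i < S.length) :
    M.reduceSeq (S.take (i + 1)) = (M.reduceSeq (S.take i)).reducePair (S.get ⟨i, hi⟩) := by
  rw [List.take_succ, reduceSeq_append, List.getElem?_eq_getElem hi]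
  rfl

theorem length_act_lt {M : Network X} {S : List (X × X)} {i : ℕ} (hi : i < S.length)
    (h : (M.reduceSeq (S.take i)).reducePair (S.get ⟨i, hi⟩) = M.reduceSeq (S.take i)) :
    (act M S).length < S.length := by
  induction S generalizing M i with
  | nil => exact absurd hi (by simp)
  | cons c S ih =>
    match i with
    | 0 =>
      have h0 : M.reducePair c = M := h
      rw [act_cons_pos h0]
      exact Nat.lt_succ_of_le (length_act_le M S)
    | (j + 1) =>
      have hj : j < S.length := Nat.succ_lt_succ_iff.1 hi
      have h' : ((M.reducePair c).reduceSeq (S.take j)).reducePair (S.get ⟨j, hj⟩) =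
          (M.reducePair c).reduceSeq (S.take j) := h
      by_cases hc : M.reducePair c = M
      · rw [act_cons_pos hc]
        refine Nat.lt_succ_of_lt (ih hj ?_)
        rwa [hc] at h'
      · rw [act_cons_neg hc, List.length_cons, List.length_cons]
        exact Nat.succ_lt_succ (ih hj h')

theorem mem_taxa_reduceSeq {M : Network X} {S : List (X × X)} {b : X}
    (hb : b ∈ M.taxa) (hm : b ∉ (act M S).map Prod.fst) :
    b ∈ (M.reduceSeq S).taxa := by
  induction S generalizing M with
  | nil => exact hb
  | cons c S ih =>
    by_cases hc : M.reducePair c = M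
    · rw [act_cons_pos hc] at hm
      rw [reduceSeq_cons, hc]
      exact ih hb hm
    · rw [act_cons_neg hc, List.map_cons] at hm
      have hbc : b ≠ c.1 := by
        intro h
        apply hm
        rw [h]
        exact List.mem_cons_self
      rw [reduceSeq_cons]
      exact ih (mem_reducePair_taxa hb hbc) (fun hh => hm (List.mem_cons_of_mem _ hh))

theorem getLast?_cons_of_ne_nil {α : Type*} (a : α) {l : List α} (h : l ≠ []) :
    (a :: l).getLast? = l.getLast? := by
  cases l with
  | nil => exact absurd rfl h
  | cons b l => exact List.getLast?_cons_cons

theorem getLast?_act_taxa {M : Network X} {S : List (X × X)} {q : X × X}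
    (h : (act M S).getLast? = some q) : q.2 ∈ (M.reduceSeq S).taxa := by
  induction S generalizing M with
  | nil => simp [act_nil] at h
  | cons c S ih =>
    by_cases hc : M.reducePair c = M
    · rw [act_cons_pos hc] at h
      rw [reduceSeq_cons, hc]
      exact ih h
    · rw [act_cons_neg hc] at h
      rw [reduceSeq_cons]
      by_cases hn : act (M.reducePair c) S = []
      · rw [hn, List.getLast?_singleton] at h
        have hq : q = c := by injection h with h'; exact h'.symm
        subst hq
        rw [reduceSeq_of_act_nil hn]
        obtain ⟨_, h2, hne⟩ := reduciblePair_taxa (reduciblePair_of_reducePair_ne hc)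
        exact mem_reducePair_taxa h2 (Ne.symm hne)
      · rw [getLast?_cons_of_ne_nil _ hn] at h
        exact ih h

theorem taxa_subsingleton_of_singleLeaf {F : Network X} (hI : F.Inv)
    (hSL : F.IsSingleLeaf) {b b' : X} (hb : b ∈ F.taxa) (hb' : b' ∈ F.taxa) : b = b' := by
  obtain ⟨z, hz, hV, hE, hne⟩ := hSL
  have key : ∀ w ∈ F.taxa, F.label w = F.label z := by
    intro w hw
    have hwV := hI.leafV w hw
    rw [hV, Finset.mem_insert, Finset.mem_singleton] at hwV
    rcases hwV with h | h
    · exfalso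
      have h1 := hI.leafIn w hw
      rw [h] at h1
      rw [hI.rootIn] at h1
      exact one_ne_zero h1.symm
    · exact h
  have e1 : b = z := hI.inj hb hz (key b hb)
  have e2 : b' = z := hI.inj hb' hz (key b' hb')
  rw [e1, e2]
end Network
namespace Network

variable {X : Type}

theorem act_isCPS {M : Network X} (hI : M.Inv) {S : List (X × X)}
    (hSL : (M.reduceSeq S).IsSingleLeaf) : IsCPS (act M S) := by
  induction S generalizing M with
  | nil =>
    refine ⟨by simp [act_nil], ?_⟩
    intro i hi
    rw [act_nil] at hi
    exact absurd hi (by simp)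
  | cons c S ih =>
    by_cases hc : M.reducePair c = M
    · rw [act_cons_pos hc]
      have heq : M.reduceSeq (c :: S) = M.reduceSeq S := by rw [reduceSeq_cons, hc]
      exact ih hI (heq ▸ hSL)
    · rw [act_cons_neg hc]
      have hI' : (M.reducePair c).Inv := inv_reducePair hI c
      have hSL' : ((M.reducePair c).reduceSeq S).IsSingleLeaf := hSL
      have hcps := ih hI' hSL'
      have hred := reduciblePair_taxa (reduciblePair_of_reducePair_ne hc)
      refine ⟨?_, ?_⟩
      · intro p hp
        rcases List.mem_cons.1 hp with rfl | hp
        · exact hred.2.2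
        · exact hcps.1 p hp
      · intro i hi
        match i, hi with
        | 0, hi =>
          by_cases hm : c.2 ∈ (act (M.reducePair c) S).map Prod.fst
          · exact Or.inl hm
          · right
            have hc2 : c.2 ∈ (M.reducePair c).taxa :=
              mem_reducePair_taxa hred.2.1 (Ne.symm hred.2.2)
            have hb : c.2 ∈ ((M.reducePair c).reduceSeq S).taxa :=
              mem_taxa_reduceSeq hc2 hm
            have hnn : (c :: act (M.reducePair c) S) ≠ [] := List.cons_ne_nil _ _
            refine ⟨(c :: act (M.reducePair c) S).getLast hnn,
              List.getLast?_eq_getLast hnn, ?_⟩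
            by_cases hT : act (M.reducePair c) S = []
            · simp [hT]
            · have hgl : (c :: act (M.reducePair c) S).getLast hnn =
                  (act (M.reducePair c) S).getLast hT := List.getLast_cons hT
              rw [hgl]
              have hq2 : ((act (M.reducePair c) S).getLast hT).2 ∈
                  ((M.reducePair c).reduceSeq S).taxa :=
                getLast?_act_taxa (List.getLast?_eq_getLast hT)
              exact taxa_subsingleton_of_singleLeaf (inv_reduceSeq hI' S) hSL' hb hq2
        | (j + 1), hi =>
          have hj : j < (act (M.reducePair c) S).length := by
            have := hi
            rw [List.length_cons] at this
            omega
          rcases hcps.2 j hj with hl | ⟨q, hq1, hq2⟩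
          · exact Or.inl hl
          · right
            refine ⟨q, ?_, hq2⟩
            have hTn : act (M.reducePair c) S ≠ [] := by
              intro h
              rw [h] at hj
              exact absurd hj (by simp)
            rw [getLast?_cons_of_ne_nil _ hTn]
            exact hq1

end Network

section Part1
variable {X : Type} [LinearOrder X]

theorem reduces_act {N : Network X} {S : List (X × X)} (h : Reduces S N) :
    Reduces (Network.act N S) N := by
  unfold Reduces at *
  rwa [Network.reduceSeq_act]

theorem smallest_isMinimalCPS {N : Network X} (hI : N.Inv) {S : List (X × X)}
    (hS : SmallestCPS S N) : IsMinimalCPS S N := by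
  refine ⟨hS.1, hS.2.1, ?_⟩
  intro i hi heq
  have h' : (N.reduceSeq (S.take i)).reducePair (S.get ⟨i, hi⟩) = N.reduceSeq (S.take i) := by
    rw [← Network.reduceSeq_take_succ _ _ _ hi]
    exact heq
  have hlt := Network.length_act_lt hi h'
  have hcps := Network.act_isCPS hI (hS.2.1 : (N.reduceSeq S).IsSingleLeaf)
  have hle := seqLE_length (hS.2.2 _ hcps (reduces_act hS.2.1))
  omega

theorem exists_smallestCPS {N : Network X} (hI : N.Inv)
    (hEx : ∃ S, IsCPS S ∧ Reduces S N) : ∃ S, SmallestCPS S N := by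
  classical
  have hP : ∃ n, ∃ S, IsCPS S ∧ Reduces S N ∧ S.length = n := by
    obtain ⟨S, h1, h2⟩ := hEx
    exact ⟨S.length, S, h1, h2, rfl⟩
  set n₀ := Nat.find hP with hn₀
  have hfindle : ∀ T, IsCPS T → Reduces T N → n₀ ≤ T.length := by
    intro T h1 h2
    exact Nat.find_min' hP ⟨T, h1, h2, rfl⟩
  set 𝒮 : Set (List (X × X)) := {S | IsCPS S ∧ Reduces S N ∧ S.length = n₀} with h𝒮
  have hkey : ∀ S ∈ 𝒮, ∀ p ∈ S, p ∈ N.taxa ×ˢ N.taxa := by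
    rintro S ⟨h1, h2, h3⟩ p hp
    have hcps := Network.act_isCPS hI (h2 : (N.reduceSeq S).IsSingleLeaf)
    have hred := reduces_act h2
    have hge := hfindle _ hcps hred
    have hle := Network.length_act_le N S
    have heq : (Network.act N S).length = S.length := by omega
    have hacts := Network.act_eq_of_length N S heq
    have hmem := Network.mem_act_taxa (hacts ▸ hp)
    exact Finset.mem_product.2 hmem
  have hfin : 𝒮.Finite := by
    refine (finite_fixedlen (N.taxa ×ˢ N.taxa) n₀).subset ?_
    rintro S hS
    exact ⟨hS.2.2, hkey S hS⟩
  have hne : 𝒮.Nonempty := by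
    obtain ⟨S, h1, h2, h3⟩ := Nat.find_spec hP
    exact ⟨S, h1, h2, h3⟩
  have hne' : hfin.toFinset.Nonempty := by
    rwa [Set.Finite.toFinset_nonempty]
  obtain ⟨m, hm, hmin⟩ := exists_lex_min_finset hfin.toFinset hne'
  rw [Set.Finite.mem_toFinset] at hm
  refine ⟨m, hm.1, hm.2.1, ?_⟩
  intro T h1 h2
  have hge := hfindle T h1 h2
  rcases lt_or_eq_of_le hge with hlt | heq
  · exact Or.inl (by rw [hm.2.2]; exact hlt)
  · have hT𝒮 : T ∈ 𝒮 := ⟨h1, h2, heq.symm⟩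
    rcases hmin T ((Set.Finite.mem_toFinset hfin).2 hT𝒮) with he | hlex
    · exact Or.inr ⟨by rw [hm.2.2, ← heq], Or.inl he⟩
    · exact Or.inr ⟨by rw [hm.2.2, ← heq], Or.inr hlex⟩

theorem smallestCPS_unique {N : Network X} {S T : List (X × X)}
    (h1 : SmallestCPS S N) (h2 : SmallestCPS T N) : S = T :=
  seqLE_antisymm (h1.2.2 T h2.1 h2.2.1) (h2.2.2 S h1.1 h1.2.1)

end Part1
namespace Network

variable {X : Type}

/-- The data of an isomorphism via a fixed map. -/
def IsoOn (f : ℕ → ℕ) (M M' : Network X) : Prop :=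
  M.taxa = M'.taxa ∧ Set.BijOn f ↑M.V ↑M'.V ∧
  (∀ u ∈ M.V, ∀ v ∈ M.V, ((u, v) ∈ M.E ↔ (f u, f v) ∈ M'.E)) ∧
  f M.root = M'.root ∧ (∀ x ∈ M.taxa, f (M.label x) = M'.label x)

theorem isomorphic_iff_isoOn {M M' : Network X} :
    M.Isomorphic M' ↔ ∃ f, IsoOn f M M' := by
  constructor
  · rintro ⟨h1, f, h2, h3, h4, h5⟩
    exact ⟨f, h1, h2, h3, h4, h5⟩
  · rintro ⟨f, h1, h2, h3, h4, h5⟩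
    exact ⟨h1, f, h2, h3, h4, h5⟩

section Transport

variable {f : ℕ → ℕ} {M M' : Network X}

theorem IsoOn.edge (h : IsoOn f M M') (hI : M.Inv) {a b : ℕ} (hab : (a, b) ∈ M.E) :
    (f a, f b) ∈ M'.E := by
  obtain ⟨ha, hb⟩ := hI.edgeV _ hab
  exact (h.2.2.1 a ha b hb).1 hab

theorem IsoOn.edge_back (h : IsoOn f M M') (hI' : M'.Inv) {a' b' : ℕ}
    (hab : (a', b') ∈ M'.E) :
    ∃ a b, a ∈ M.V ∧ b ∈ M.V ∧ f a = a' ∧ f b = b' ∧ (a, b) ∈ M.E := by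
  obtain ⟨ha', hb'⟩ := hI'.edgeV _ hab
  obtain ⟨a, ha, hfa⟩ := h.2.1.2.2 ha'
  obtain ⟨b, hb, hfb⟩ := h.2.1.2.2 hb'
  refine ⟨a, b, ha, hb, hfa, hfb, ?_⟩
  rw [h.2.2.1 a ha b hb, hfa, hfb]
  exact hab

theorem IsoOn.indeg_eq (h : IsoOn f M M') (hI : M.Inv) (hI' : M'.Inv) {v : ℕ}
    (hv : v ∈ M.V) : M'.indeg (f v) = M.indeg v := by
  have himg : M'.E.filter (fun e => e.2 = f v) =
      (M.E.filter (fun e => e.2 = v)).image (fun e => (f e.1, f e.2)) := by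
    ext ⟨a', b'⟩
    rw [Finset.mem_filter, Finset.mem_image]
    constructor
    · rintro ⟨he', hb'⟩
      obtain ⟨a, b, ha, hb, hfa, hfb, hab⟩ := h.edge_back hI' he'
      have hbv : b = v := h.2.1.2.1 hb hv (hfb.trans hb')
      exact ⟨(a, b), Finset.mem_filter.2 ⟨hab, hbv⟩, by rw [hfa, hfb]⟩
    · rintro ⟨⟨a, b⟩, hm, heq⟩
      obtain ⟨hab, hb⟩ := Finset.mem_filter.1 hm
      obtain ⟨rfl, rfl⟩ : f a = a' ∧ f b = b' := by
        rw [Prod.mk.injEq] at heq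
        exact ⟨heq.1, heq.2⟩
      exact ⟨h.edge hI hab, by rw [show b = v from hb]⟩
  rw [indeg, indeg, himg, Finset.card_image_of_injOn]
  intro e1 h1 e2 h2 heq
  obtain ⟨h1E, _⟩ := Finset.mem_filter.1 h1
  obtain ⟨h2E, _⟩ := Finset.mem_filter.1 h2
  obtain ⟨ha1, hb1⟩ := hI.edgeV _ h1E
  obtain ⟨ha2, hb2⟩ := hI.edgeV _ h2E
  rw [Prod.mk.injEq] at heq
  have e1' : e1.1 = e2.1 := h.2.1.2.1 ha1 ha2 heq.1
  have e2' : e1.2 = e2.2 := h.2.1.2.1 hb1 hb2 heq.2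
  exact Prod.ext e1' e2'

theorem IsoOn.outdeg_eq (h : IsoOn f M M') (hI : M.Inv) (hI' : M'.Inv) {v : ℕ}
    (hv : v ∈ M.V) : M'.outdeg (f v) = M.outdeg v := by
  have himg : M'.E.filter (fun e => e.1 = f v) =
      (M.E.filter (fun e => e.1 = v)).image (fun e => (f e.1, f e.2)) := by
    ext ⟨a', b'⟩
    rw [Finset.mem_filter, Finset.mem_image]
    constructor
    · rintro ⟨he', ha'⟩
      obtain ⟨a, b, ha, hb, hfa, hfb, hab⟩ := h.edge_back hI' he'
      have hav : a = v := h.2.1.2.1 ha hv (hfa.trans ha')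
      exact ⟨(a, b), Finset.mem_filter.2 ⟨hab, hav⟩, by rw [hfa, hfb]⟩
    · rintro ⟨⟨a, b⟩, hm, heq⟩
      obtain ⟨hab, ha⟩ := Finset.mem_filter.1 hm
      obtain ⟨rfl, rfl⟩ : f a = a' ∧ f b = b' := by
        rw [Prod.mk.injEq] at heq
        exact ⟨heq.1, heq.2⟩
      exact ⟨h.edge hI hab, by rw [show a = v from ha]⟩
  rw [outdeg, outdeg, himg, Finset.card_image_of_injOn]
  intro e1 h1 e2 h2 heq
  obtain ⟨h1E, _⟩ := Finset.mem_filter.1 h1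
  obtain ⟨h2E, _⟩ := Finset.mem_filter.1 h2
  obtain ⟨ha1, hb1⟩ := hI.edgeV _ h1E
  obtain ⟨ha2, hb2⟩ := hI.edgeV _ h2E
  rw [Prod.mk.injEq] at heq
  exact Prod.ext (h.2.1.2.1 ha1 ha2 heq.1) (h.2.1.2.1 hb1 hb2 heq.2)

theorem IsoOn.theParent_eq (h : IsoOn f M M') (hI : M.Inv) (hI' : M'.Inv) {x : X}
    (hx : x ∈ M.taxa) :
    M'.theParent (M'.label x) = f (M.theParent (M.label x)) := by
  obtain ⟨hp, _⟩ := theParent_edge (hI.leafIn x hx)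
  have hx' : x ∈ M'.taxa := h.1 ▸ hx
  obtain ⟨_, hu'⟩ := theParent_edge (hI'.leafIn x hx')
  have hfe : (f (M.theParent (M.label x)), M'.label x) ∈ M'.E := by
    have := h.edge hI hp
    rwa [h.2.2.2.2 x hx] at this
  exact (hu' _ hfe).symm

end Transport

end Network
namespace Network

variable {X : Type} {f : ℕ → ℕ} {M M' : Network X}

theorem IsoOn.injV (h : IsoOn f M M') : Set.InjOn f ↑M.V := h.2.1.2.1

theorem IsoOn.isCherry_iff (h : IsoOn f M M') (hI : M.Inv) (hI' : M'.Inv) {x y : X} :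
    M.IsCherry x y ↔ M'.IsCherry x y := by
  constructor
  · rintro ⟨hx, hy, hxy, p, hpx, hpy⟩
    refine ⟨h.1 ▸ hx, h.1 ▸ hy, hxy, f p, ?_, ?_⟩
    · have := h.edge hI hpx
      rwa [h.2.2.2.2 x hx] at this
    · have := h.edge hI hpy
      rwa [h.2.2.2.2 y hy] at this
  · rintro ⟨hx', hy', hxy, p', hpx, hpy⟩
    have hx : x ∈ M.taxa := h.1 ▸ hx'
    have hy : y ∈ M.taxa := h.1 ▸ hy'
    refine ⟨hx, hy, hxy, ?_⟩
    obtain ⟨a, b, ha, hb, hfa, hfb, hab⟩ := h.edge_back hI' hpx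
    have hbx : b = M.label x :=
      h.injV hb (hI.leafV x hx) (by rw [hfb, h.2.2.2.2 x hx])
    obtain ⟨a2, b2, ha2, hb2, hfa2, hfb2, hab2⟩ := h.edge_back hI' hpy
    have ha12 : a2 = a := h.injV ha2 ha (hfa2.trans hfa.symm)
    have hby : b2 = M.label y :=
      h.injV hb2 (hI.leafV y hy) (by rw [hfb2, h.2.2.2.2 y hy])
    exact ⟨a, hbx ▸ hab, ha12 ▸ hby ▸ hab2⟩

theorem IsoOn.isRetic_iff (h : IsoOn f M M') (hI : M.Inv) (hI' : M'.Inv) {v : ℕ}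
    (hv : v ∈ M.V) : M.IsRetic v ↔ M'.IsRetic (f v) := by
  rw [IsRetic, IsRetic, h.indeg_eq hI hI' hv, h.outdeg_eq hI hI' hv]

theorem IsoOn.isTreeNode_iff (h : IsoOn f M M') (hI : M.Inv) (hI' : M'.Inv) {v : ℕ}
    (hv : v ∈ M.V) : M.IsTreeNode v ↔ M'.IsTreeNode (f v) := by
  rw [IsTreeNode, IsTreeNode, h.indeg_eq hI hI' hv, h.outdeg_eq hI hI' hv]

theorem IsoOn.isRetCherry_iff (h : IsoOn f M M') (hI : M.Inv) (hI' : M'.Inv) {x y : X} :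
    M.IsRetCherry x y ↔ M'.IsRetCherry x y := by
  constructor
  · rintro ⟨hx, hy, hxy, px, py, hpx, hpy, hr, ht, hpp⟩
    have hpxV : px ∈ M.V := (hI.edgeV _ hpx).1
    have hpyV : py ∈ M.V := (hI.edgeV _ hpy).1
    refine ⟨h.1 ▸ hx, h.1 ▸ hy, hxy, f px, f py, ?_, ?_, ?_, ?_, h.edge hI hpp⟩
    · have := h.edge hI hpx
      rwa [h.2.2.2.2 x hx] at this
    · have := h.edge hI hpy
      rwa [h.2.2.2.2 y hy] at this
    · exact (h.isRetic_iff hI hI' hpxV).1 hr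
    · exact (h.isTreeNode_iff hI hI' hpyV).1 ht
  · rintro ⟨hx', hy', hxy, px', py', hpx, hpy, hr, ht, hpp⟩
    have hx : x ∈ M.taxa := h.1 ▸ hx'
    have hy : y ∈ M.taxa := h.1 ▸ hy'
    obtain ⟨a, b, ha, hb, hfa, hfb, hab⟩ := h.edge_back hI' hpx
    have hbx : b = M.label x :=
      h.injV hb (hI.leafV x hx) (by rw [hfb, h.2.2.2.2 x hx])
    obtain ⟨a2, b2, ha2, hb2, hfa2, hfb2, hab2⟩ := h.edge_back hI' hpy
    have hby : b2 = M.label y :=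
      h.injV hb2 (hI.leafV y hy) (by rw [hfb2, h.2.2.2.2 y hy])
    obtain ⟨a3, b3, ha3, hb3, hfa3, hfb3, hab3⟩ := h.edge_back hI' hpp
    have ha32 : a3 = a2 := h.injV ha3 ha2 (hfa3.trans hfa2.symm)
    have hb3a : b3 = a := h.injV hb3 ha (hfb3.trans hfa.symm)
    refine ⟨hx, hy, hxy, a, a2, hbx ▸ hab, hby ▸ hab2, ?_, ?_, ha32 ▸ hb3a ▸ hab3⟩
    · rw [h.isRetic_iff hI hI' ha, hfa]
      exact hr
    · rw [h.isTreeNode_iff hI hI' ha2, hfa2]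
      exact ht

theorem bijOn_finset_erase {V V' : Finset ℕ} (h : Set.BijOn f ↑V ↑V') {u : ℕ}
    (hu : u ∈ V) : Set.BijOn f ↑(V.erase u) ↑(V'.erase (f u)) := by
  refine ⟨?_, ?_, ?_⟩
  · intro w hw
    rw [Finset.coe_erase, Set.mem_diff, Set.mem_singleton_iff] at hw
    rw [Finset.coe_erase, Set.mem_diff, Set.mem_singleton_iff]
    exact ⟨h.1 hw.1, fun he => hw.2 (h.2.1 hw.1 hu he)⟩
  · exact Set.InjOn.mono
      (fun w hw => Finset.mem_coe.2 (Finset.mem_of_mem_erase (Finset.mem_coe.1 hw))) h.2.1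
  · intro w' hw'
    rw [Finset.coe_erase, Set.mem_diff, Set.mem_singleton_iff] at hw'
    obtain ⟨w, hw, hfw⟩ := h.2.2 hw'.1
    refine ⟨w, ?_, hfw⟩
    rw [Finset.coe_erase, Set.mem_diff, Set.mem_singleton_iff]
    refine ⟨hw, ?_⟩
    rintro rfl
    exact hw'.2 hfw.symm

theorem mem_suppress_V {A : Network X} {w v : ℕ} (hw : w ∈ A.V) (hne : w ≠ v) :
    w ∈ (A.suppress v).V := by
  by_cases hc : A.indeg v = 1 ∧ A.outdeg v = 1
  · rw [suppress_V hc]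
    exact Finset.mem_erase.2 ⟨hne, hw⟩
  · rw [suppress_of_not hc]
    exact hw

theorem iso_cherry_mid (h : IsoOn f M M') (hI : M.Inv) (hI' : M'.Inv) {x : X}
    (hx : x ∈ M.taxa) :
    IsoOn f
      { V := M.V.erase (M.label x),
        E := M.E.filter (fun e => e.1 ≠ M.label x ∧ e.2 ≠ M.label x),
        root := M.root, taxa := M.taxa.erase x, label := M.label }
      { V := M'.V.erase (M'.label x),
        E := M'.E.filter (fun e => e.1 ≠ M'.label x ∧ e.2 ≠ M'.label x),
        root := M'.root, taxa := M'.taxa.erase x, label := M'.label } := by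
  have hx' : x ∈ M'.taxa := h.1 ▸ hx
  have hlx : M.label x ∈ M.V := hI.leafV x hx
  have hfl : f (M.label x) = M'.label x := h.2.2.2.2 x hx
  refine ⟨by rw [h.1], ?_, ?_, h.2.2.2.1, ?_⟩
  · have := bijOn_finset_erase h.2.1 hlx
    rwa [hfl] at this
  · intro u hu v hv
    simp only [Finset.mem_erase] at hu hv
    show (u, v) ∈ M.E.filter _ ↔ (f u, f v) ∈ M'.E.filter _
    rw [Finset.mem_filter, Finset.mem_filter]
    have hiff := h.2.2.1 u hu.2 v hv.2
    have hu' : f u ≠ M'.label x ↔ u ≠ M.label x := by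
      rw [← hfl]
      exact not_congr ⟨fun he => h.injV hu.2 hlx he, fun he => he ▸ rfl⟩
    have hv' : f v ≠ M'.label x ↔ v ≠ M.label x := by
      rw [← hfl]
      exact not_congr ⟨fun he => h.injV hv.2 hlx he, fun he => he ▸ rfl⟩
    constructor
    · rintro ⟨he, h1, h2⟩
      exact ⟨hiff.1 he, hu'.2 h1, hv'.2 h2⟩
    · rintro ⟨he, h1, h2⟩
      exact ⟨hiff.2 he, hu'.1 h1, hv'.1 h2⟩
  · intro z hz
    exact h.2.2.2.2 z (Finset.mem_of_mem_erase hz)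

theorem iso_delEdge (h : IsoOn f M M') {a b : ℕ} (ha : a ∈ M.V) (hb : b ∈ M.V) :
    IsoOn f (M.delEdge (a, b)) (M'.delEdge (f a, f b)) := by
  refine ⟨h.1, h.2.1, ?_, h.2.2.2.1, h.2.2.2.2⟩
  intro u hu v hv
  show (u, v) ∈ M.E.erase (a, b) ↔ (f u, f v) ∈ M'.E.erase (f a, f b)
  rw [Finset.mem_erase, Finset.mem_erase]
  have hiff := h.2.2.1 u hu v hv
  constructor
  · rintro ⟨hne, he⟩
    refine ⟨?_, hiff.1 he⟩
    intro heq
    rw [Prod.mk.injEq] at heq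
    apply hne
    rw [Prod.mk.injEq]
    exact ⟨h.injV hu ha heq.1, h.injV hv hb heq.2⟩
  · rintro ⟨hne, he⟩
    refine ⟨?_, hiff.2 he⟩
    intro heq
    rw [Prod.mk.injEq] at heq
    apply hne
    rw [Prod.mk.injEq]
    exact ⟨congrArg f heq.1, congrArg f heq.2⟩

theorem iso_suppress (h : IsoOn f M M') (hI : M.Inv) (hI' : M'.Inv) {v : ℕ}
    (hv : v ∈ M.V) : IsoOn f (M.suppress v) (M'.suppress (f v)) := by
  have hdi := h.indeg_eq hI hI' hv
  have hdo := h.outdeg_eq hI hI' hv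
  by_cases hc : M.indeg v = 1 ∧ M.outdeg v = 1
  · have hc' : M'.indeg (f v) = 1 ∧ M'.outdeg (f v) = 1 := by
      rw [hdi, hdo]; exact hc
    refine ⟨?_, ?_, ?_, ?_, ?_⟩
    · rw [suppress_taxa, suppress_taxa]; exact h.1
    · rw [suppress_V hc, suppress_V hc']
      exact bijOn_finset_erase h.2.1 hv
    · intro u hu w hw
      rw [suppress_V hc, Finset.mem_erase] at hu hw
      rw [mem_suppress_E hc, mem_suppress_E hc']
      have hiff := h.2.2.1 u hu.2 w hw.2
      have hiffuv := h.2.2.1 u hu.2 v hv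
      have hiffvw := h.2.2.1 v hv w hw.2
      constructor
      · rintro (⟨he, h1, h2⟩ | ⟨h1, h2⟩)
        · refine Or.inl ⟨hiff.1 he, ?_, ?_⟩
          · intro heq; exact h1 (h.injV hu.2 hv heq)
          · intro heq; exact h2 (h.injV hw.2 hv heq)
        · exact Or.inr ⟨hiffuv.1 h1, hiffvw.1 h2⟩
      · rintro (⟨he, h1, h2⟩ | ⟨h1, h2⟩)
        · refine Or.inl ⟨hiff.2 he, ?_, ?_⟩
          · rintro rfl; exact h1 rfl
          · rintro rfl; exact h2 rfl
        · exact Or.inr ⟨hiffuv.2 h1, hiffvw.2 h2⟩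
    · rw [suppress_root, suppress_root]; exact h.2.2.2.1
    · intro z hz
      rw [suppress_taxa] at hz
      rw [suppress_label, suppress_label]
      exact h.2.2.2.2 z hz
  · have hc' : ¬(M'.indeg (f v) = 1 ∧ M'.outdeg (f v) = 1) := by
      rw [hdi, hdo]; exact hc
    rw [suppress_of_not hc, suppress_of_not hc']
    exact h

end Network
namespace Network

variable {X : Type} {f : ℕ → ℕ} {M M' : Network X}

theorem iso_reducePair (h : IsoOn f M M') (hI : M.Inv) (hI' : M'.Inv) (c : X × X) :
    IsoOn f (M.reducePair c) (M'.reducePair c) := by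
  by_cases h1 : M.IsCherry c.1 c.2
  · have h1' : M'.IsCherry c.1 c.2 := (h.isCherry_iff hI hI').1 h1
    rw [reducePair, reducePair, if_pos h1, if_pos h1']
    have hx : c.1 ∈ M.taxa := h1.1
    have hpe := theParent_edge (hI.leafIn c.1 hx)
    have hθV : M.theParent (M.label c.1) ∈ M.V := (hI.edgeV _ hpe.1).1
    have hθne : M.theParent (M.label c.1) ≠ M.label c.1 := fun hq =>
      outdeg_eq_zero_iff.1 (hI.leafOut c.1 hx) _ (by rw [← hq]; exact hpe.1)
    rw [h.theParent_eq hI hI' hx]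
    exact iso_suppress (iso_cherry_mid h hI hI' hx) (inv_cherry_mid hI hx)
      (inv_cherry_mid hI' (h.1 ▸ hx)) (Finset.mem_erase.2 ⟨hθne, hθV⟩)
  · have h1' : ¬ M'.IsCherry c.1 c.2 := fun hh => h1 ((h.isCherry_iff hI hI').2 hh)
    by_cases h2 : M.IsRetCherry c.1 c.2
    · have h2' : M'.IsRetCherry c.1 c.2 := (h.isRetCherry_iff hI hI').1 h2
      rw [reducePair, reducePair, if_neg h1, if_neg h1', if_pos h2, if_pos h2']
      obtain ⟨hx, hy, hxy, px, py, hpx, hpy, hr, ht, hpp⟩ := h2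
      have e1 : M.theParent (M.label c.1) = px :=
        ((theParent_edge (hI.leafIn c.1 hx)).2 px hpx).symm
      have e2 : M.theParent (M.label c.2) = py :=
        ((theParent_edge (hI.leafIn c.2 hy)).2 py hpy).symm
      have hpxV : px ∈ M.V := (hI.edgeV _ hpx).1
      have hpyV : py ∈ M.V := (hI.edgeV _ hpy).1
      have hne : px ≠ py := fun he => hI.no_self_loop (he ▸ hpp)
      have e1' : M'.theParent (M'.label c.1) = f px := by
        rw [h.theParent_eq hI hI' hx, e1]
      have e2' : M'.theParent (M'.label c.2) = f py := by
        rw [h.theParent_eq hI hI' hy, e2]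
      rw [e1, e2, e1', e2']
      have hout : M.outdeg px ≠ 0 := by
        rw [hr.2]; exact one_ne_zero
      have hout' : M'.outdeg (f px) ≠ 0 := by
        rw [h.outdeg_eq hI hI' hpxV]; exact hout
      have hI1 : (M.delEdge (py, px)).Inv := inv_delEdge hI hout
      have hI1' : (M'.delEdge (f py, f px)).Inv := inv_delEdge hI' hout'
      have hiso2 := iso_suppress (iso_delEdge h hpyV hpxV) hI1 hI1'
        (show py ∈ (M.delEdge (py, px)).V from hpyV)
      exact iso_suppress hiso2 (inv_suppress hI1 py) (inv_suppress hI1' (f py))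
        (mem_suppress_V (show px ∈ (M.delEdge (py, px)).V from hpxV) hne)
    · have h2' : ¬ M'.IsRetCherry c.1 c.2 := fun hh => h2 ((h.isRetCherry_iff hI hI').2 hh)
      rw [reducePair, reducePair, if_neg h1, if_neg h1', if_neg h2, if_neg h2']
      exact h

theorem iso_reduceSeq (h : IsoOn f M M') (hI : M.Inv) (hI' : M'.Inv) (S : List (X × X)) :
    IsoOn f (M.reduceSeq S) (M'.reduceSeq S) := by
  induction S generalizing M M' with
  | nil => exact h
  | cons c S ih =>
    rw [reduceSeq_cons, reduceSeq_cons]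
    exact ih (iso_reducePair h hI hI' c) (inv_reducePair hI c) (inv_reducePair hI' c)

theorem IsoOn.singleLeaf {F F' : Network X} {f : ℕ → ℕ} (h : IsoOn f F F')
    (hI' : F'.Inv) (hSL : F.IsSingleLeaf) : F'.IsSingleLeaf := by
  obtain ⟨z, hz, hV, hE, hne⟩ := hSL
  have hz' : z ∈ F'.taxa := h.1 ▸ hz
  have hrV : F.root ∈ F.V := by rw [hV]; exact Finset.mem_insert_self _ _
  have hlV : F.label z ∈ F.V := by
    rw [hV]; exact Finset.mem_insert_of_mem (Finset.mem_singleton_self _)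
  have hfl : f (F.label z) = F'.label z := h.2.2.2.2 z hz
  have hfr : f F.root = F'.root := h.2.2.2.1
  refine ⟨z, hz', ?_, ?_, ?_⟩
  · apply Finset.coe_injective
    have himg : (↑F'.V : Set ℕ) = f '' ↑F.V := h.2.1.image_eq.symm
    rw [himg, hV, Finset.coe_insert, Finset.coe_singleton, Set.image_insert_eq,
      Set.image_singleton, hfr, hfl, Finset.coe_insert, Finset.coe_singleton]
  · ext ⟨a, b⟩
    rw [Finset.mem_singleton]
    constructor
    · intro he'
      obtain ⟨u, w, hu, hw, hfu, hfw, huw⟩ := h.edge_back hI' he'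
      rw [hE, Finset.mem_singleton, Prod.mk.injEq] at huw
      rw [Prod.mk.injEq]
      constructor
      · rw [← hfu, huw.1, hfr]
      · rw [← hfw, huw.2, hfl]
    · intro heq
      have hself : (F.root, F.label z) ∈ F.E := by
        rw [hE]; exact Finset.mem_singleton_self _
      have h2 := (h.2.2.1 _ hrV _ hlV).1 hself
      rw [hfr, hfl] at h2
      exact heq ▸ h2
  · intro heq'
    apply hne
    exact h.injV hrV hlV (by rw [hfr, hfl]; exact heq')

theorem IsoOn.symm' (h : IsoOn f M M') (hI : M.Inv) :
    IsoOn (Function.invFunOn f ↑M.V) M' M := by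
  have hinv : Set.InvOn (Function.invFunOn f ↑M.V) f ↑M.V ↑M'.V :=
    h.2.1.invOn_invFunOn
  have hbij : Set.BijOn (Function.invFunOn f ↑M.V) ↑M'.V ↑M.V :=
    Set.BijOn.symm hinv.symm h.2.1
  refine ⟨h.1.symm, hbij, ?_, ?_, ?_⟩
  · intro u' hu' v' hv'
    have hgu : Function.invFunOn f ↑M.V u' ∈ M.V := hbij.1 hu'
    have hgv : Function.invFunOn f ↑M.V v' ∈ M.V := hbij.1 hv'
    have hfu : f (Function.invFunOn f ↑M.V u') = u' := hinv.2 hu'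
    have hfv : f (Function.invFunOn f ↑M.V v') = v' := hinv.2 hv'
    rw [Iff.comm, h.2.2.1 _ hgu _ hgv, hfu, hfv]
  · rw [← h.2.2.2.1]
    exact hinv.1 hI.rootV
  · intro x hx
    have hx0 : x ∈ M.taxa := by rw [h.1]; exact hx
    rw [← h.2.2.2.2 x hx0]
    exact hinv.1 (hI.leafV x hx0)

theorem reduces_transport {N N' : Network X} {f : ℕ → ℕ} (h : IsoOn f N N')
    (hI : N.Inv) (hI' : N'.Inv) {S : List (X × X)} (hred : Reduces S N) :
    Reduces S N' :=
  (iso_reduceSeq h hI hI' S).singleLeaf (inv_reduceSeq hI' S) hred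

end Network
/-- with a total order on the taxa, every CPN has a unique
smallest CPS, and within a reconstructible class two CPNs on the same taxa are
isomorphic iff they share the same smallest CPS. -/
theorem unique_smallest_CPS_and_isomorphism (X : Type) [LinearOrder X]
    (N : Network X) (hN : N.IsCPN) :
    (∃! S : List (X × X), SmallestCPS S N) ∧
    ∀ C : Network X → Prop, Reconstructible C →
      ∀ N' : Network X, C N → C N' → N'.IsCPN → N.taxa = N'.taxa →
        (Isomorphic N N' ↔ ∃ S, SmallestCPS S N ∧ SmallestCPS S N') := by
  have hIN : N.Inv := Network.Inv.of_isPhylo hN.1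
  have hexu : ∃! S : List (X × X), SmallestCPS S N := by
    obtain ⟨S, hS⟩ := exists_smallestCPS hIN hN.2
    exact ⟨S, hS, fun T hT => smallestCPS_unique hT hS⟩
  refine ⟨hexu, ?_⟩
  intro C hrec N' hCN hCN' hN' htaxa
  have hIN' : N'.Inv := Network.Inv.of_isPhylo hN'.1
  constructor
  · intro hiso
    obtain ⟨f, hf⟩ := Network.isomorphic_iff_isoOn.1 hiso
    have hg := hf.symm' hIN
    obtain ⟨S, hS⟩ := exists_smallestCPS hIN hN.2
    refine ⟨S, hS, hS.1, Network.reduces_transport hf hIN hIN' hS.2.1, ?_⟩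
    intro T h1 h2
    exact hS.2.2 T h1 (Network.reduces_transport hg hIN' hIN h2)
  · rintro ⟨S, h1, h2⟩
    exact hrec N N' hCN hCN'
      ⟨S, smallest_isMinimalCPS hIN h1, smallest_isMinimalCPS hIN' h2⟩
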